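/- arXiv:1901.07051 — 2 statements merged into one kernel-verified Lean document; each statement's English description precedes it below -/
import Mathlib

section
/- Let G be a finite connected undirected weighted graph on N vertices with graph Laplacian Δ, eigenvalues 0 = λ_0 < λ_1 ≤ … ≤ λ_{N−1}, orthonormal eigenvectors φ_0, …, φ_{N−1}, and Hermitian graph wavelets ψ_{t,x}. Let ρ : V×V → [0,∞) be an intrinsic metric on G with jump size s > 0, and suppose the heat kernel bound H_t(x,y) ≤ exp(−ζ_s(t, ρ(x,y))) holds for all t > 0 and all vertices x, y. Then there exists a constant c > 0 (depending only on G) such that for all t > 0 and all vertices x ≠ y, writing r = ρ(x,y), one has |ψ_{t,x}(y)| ≤ t · ( |∂ζ_s/∂t (t,r)| + c/t ) · exp(−ζ_s(t,r)). -/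
open Finset

/-- The Hermitian graph wavelet `ψ_{t,x}(y) = ∑_{k=1}^{N-1} t λ_k e^{-t λ_k} φ_k(x) φ_k(y)`. -/
noncomputable def hermPsi {N : ℕ} (lam : Fin N → ℝ) (φ : Fin N → Fin N → ℝ)
    (t : ℝ) (x y : Fin N) : ℝ :=
  ∑ k ∈ Finset.univ.filter (fun k : Fin N => (k : ℕ) ≠ 0),
    t * lam k * Real.exp (-(t * lam k)) * φ k x * φ k y

/-- The heat kernel `H_t(x,y) = ∑_{k=0}^{N-1} e^{-t λ_k} φ_k(x) φ_k(y)`. -/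
noncomputable def heatKernel {N : ℕ} (lam : Fin N → ℝ) (φ : Fin N → Fin N → ℝ)
    (t : ℝ) (x y : Fin N) : ℝ :=
  ∑ k, Real.exp (-(t * lam k)) * φ k x * φ k y

/-- `ζ_s(t, r) = (1/s²) (r s · arcsinh(r s / t) − √(t² + r² s²) + t)`. -/
noncomputable def zeta (s r t : ℝ) : ℝ :=
  (1 / s ^ 2) * (r * s * Real.arsinh (r * s / t) - Real.sqrt (t ^ 2 + r ^ 2 * s ^ 2) + t)

open scoped Matrix

-- ==================== auxiliary lemmas ====================

section Aux

open NormedSpace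

lemma matExpEntryNonneg {N : ℕ} (M : Matrix (Fin N) (Fin N) ℝ)
    (hM : ∀ i j, 0 ≤ M i j) (i j : Fin N) : 0 ≤ exp M i j := by
  have hpow : ∀ (n : ℕ) (a b : Fin N), 0 ≤ (M ^ n) a b := by
    intro n
    induction n with
    | zero => intro a b; simp [Matrix.one_apply]; positivity
    | succ n ih =>
      intro a b
      rw [pow_succ, Matrix.mul_apply]
      exact Finset.sum_nonneg fun z _ => mul_nonneg (ih a z) (hM z b)
  have hsum : Summable (fun n : ℕ => (n.factorial⁻¹ : ℝ) • M ^ n) := by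
    letI : SeminormedRing (Matrix (Fin N) (Fin N) ℝ) := Matrix.linftyOpSemiNormedRing
    letI : NormedRing (Matrix (Fin N) (Fin N) ℝ) := Matrix.linftyOpNormedRing
    letI : NormedAlgebra ℝ (Matrix (Fin N) (Fin N) ℝ) := Matrix.linftyOpNormedAlgebra
    exact expSeries_summable' (𝕂 := ℝ) M
  have h1 : exp M i j = ∑' n : ℕ, ((n.factorial⁻¹ : ℝ) • M ^ n) i j := by
    rw [exp_eq_tsum (𝕂 := ℝ)]
    show (∑' n : ℕ, (n.factorial⁻¹ : ℝ) • M ^ n) i j = _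
    exact (congrFun (tsum_apply hsum) j).trans (tsum_apply (Pi.summable.mp hsum i))
  rw [h1]
  refine tsum_nonneg fun n => ?_
  have : ((n.factorial⁻¹ : ℝ) • M ^ n) i j = (n.factorial⁻¹ : ℝ) * (M ^ n) i j := rfl
  rw [this]
  exact mul_nonneg (by positivity) (hpow n i j)

lemma matExpNegNonneg {N : ℕ} (Δ : Matrix (Fin N) (Fin N) ℝ) (m : ℝ)
    (hoff : ∀ i j, i ≠ j → Δ i j ≤ 0) (hm : ∀ i, Δ i i ≤ m)
    (t : ℝ) (ht : 0 ≤ t) (i j : Fin N) : 0 ≤ exp (-(t • Δ)) i j := by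
  letI : SeminormedRing (Matrix (Fin N) (Fin N) ℝ) := Matrix.linftyOpSemiNormedRing
  letI : NormedRing (Matrix (Fin N) (Fin N) ℝ) := Matrix.linftyOpNormedRing
  letI : NormedAlgebra ℝ (Matrix (Fin N) (Fin N) ℝ) := Matrix.linftyOpNormedAlgebra
  set B : Matrix (Fin N) (Fin N) ℝ := t • (m • (1 : Matrix (Fin N) (Fin N) ℝ) - Δ) with hB
  have hBnn : ∀ a b, 0 ≤ B a b := by
    intro a b
    rcases eq_or_ne a b with rfl | hab
    · have : B a a = t * (m - Δ a a) := by simp [hB, Matrix.one_apply]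
      rw [this]; exact mul_nonneg ht (by linarith [hm a])
    · have : B a b = t * (0 - Δ a b) := by simp [hB, Matrix.one_apply_ne hab]
      rw [this]; exact mul_nonneg ht (by linarith [hoff a b hab])
  have hdecomp : -(t • Δ) = B + (-(t * m)) • (1 : Matrix (Fin N) (Fin N) ℝ) := by
    rw [hB]; rw [smul_sub]; rw [smul_smul]; rw [neg_smul]; abel
  have hcomm : Commute B ((-(t * m)) • (1 : Matrix (Fin N) (Fin N) ℝ)) :=
    (Commute.one_right B).smul_right _
  rw [hdecomp, Matrix.exp_add_of_commute _ _ hcomm]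
  have hsc : exp ((-(t * m)) • (1 : Matrix (Fin N) (Fin N) ℝ))
      = Real.exp (-(t * m)) • (1 : Matrix (Fin N) (Fin N) ℝ) := by
    rw [← Algebra.algebraMap_eq_smul_one, ← Algebra.algebraMap_eq_smul_one, Real.exp_eq_exp_ℝ]
    exact (algebraMap_exp_comm _).symm
  rw [hsc]
  have : (exp B * (Real.exp (-(t * m)) • (1 : Matrix (Fin N) (Fin N) ℝ))) i j
      = Real.exp (-(t * m)) * exp B i j := by
    rw [Matrix.mul_smul, Matrix.mul_one]
    rfl
  rw [this]
  exact mul_nonneg (Real.exp_pos _).le (matExpEntryNonneg B hBnn i j)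

lemma zetaHasDerivAt (s t : ℝ) (hs : 0 < s) (ht : 0 < t) (r : ℝ) :
    HasDerivAt (fun r => zeta s r t) (Real.arsinh (r * s / t) / s) r := by
  have hst : (0:ℝ) < t ^ 2 + r ^ 2 * s ^ 2 := by positivity
  have hB : (0:ℝ) < Real.sqrt (1 + (r * s / t) ^ 2) := Real.sqrt_pos.mpr (by positivity)
  have hA : Real.sqrt (t ^ 2 + r ^ 2 * s ^ 2) = t * Real.sqrt (1 + (r * s / t) ^ 2) := by
    rw [← Real.sqrt_sq ht.le, ← Real.sqrt_mul (by positivity)]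
    congr 1
    field_simp
    rw [Real.sq_sqrt (by positivity)]
  have h1 : HasDerivAt (fun r : ℝ => r * s) s r := by
    simpa using (hasDerivAt_id r).mul_const s
  have h2 : HasDerivAt (fun r : ℝ => r * s / t) (s / t) r := h1.div_const t
  have h3 : HasDerivAt (fun r : ℝ => Real.arsinh (r * s / t))
      ((Real.sqrt (1 + (r * s / t) ^ 2))⁻¹ * (s / t)) r :=
    (Real.hasDerivAt_arsinh _).comp r h2
  have h4 : HasDerivAt (fun r : ℝ => r * s * Real.arsinh (r * s / t))
      (s * Real.arsinh (r * s / t) + r * s * ((Real.sqrt (1 + (r * s / t) ^ 2))⁻¹ * (s / t))) r :=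
    by exact h1.mul h3
  have h5 : HasDerivAt (fun r : ℝ => t ^ 2 + r ^ 2 * s ^ 2) (2 * r * s ^ 2) r := by
    have := ((hasDerivAt_pow 2 r).mul_const (s ^ 2)).const_add (t ^ 2)
    simpa [mul_comm, mul_assoc, mul_left_comm] using this
  have h6 : HasDerivAt (fun r : ℝ => Real.sqrt (t ^ 2 + r ^ 2 * s ^ 2))
      (1 / (2 * Real.sqrt (t ^ 2 + r ^ 2 * s ^ 2)) * (2 * r * s ^ 2)) r :=
    (Real.hasDerivAt_sqrt hst.ne').comp r h5
  have h7 := (((h4.sub h6).add_const t).const_mul (1 / s ^ 2))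
  refine h7.congr_deriv ?_
  rw [hA]
  have hAB : Real.sqrt (t ^ 2 + r ^ 2 * s ^ 2) ≠ 0 := by rw [hA]; positivity
  field_simp
  ring

lemma zetaDiff (s t : ℝ) (hs : 0 < s) (ht : 0 < t) {a b : ℝ} (ha : 0 ≤ a) (hab : a ≤ b) :
    0 ≤ zeta s b t - zeta s a t ∧
      zeta s b t - zeta s a t ≤ (b - a) * (Real.arsinh (b * s / t) / s) := by
  rcases eq_or_lt_of_le hab with rfl | hlt
  · simp
  obtain ⟨ξ, hξ, hslope⟩ := exists_hasDerivAt_eq_slope (fun r => zeta s r t)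
    (fun r => Real.arsinh (r * s / t) / s) hlt
    (fun x _ => (zetaHasDerivAt s t hs ht x).continuousAt.continuousWithinAt)
    (fun x _ => zetaHasDerivAt s t hs ht x)
  have hξ0 : 0 ≤ ξ := le_of_lt (lt_of_le_of_lt ha hξ.1)
  have heq : zeta s b t - zeta s a t = (b - a) * (Real.arsinh (ξ * s / t) / s) := by
    have hne : b - a ≠ 0 := by linarith
    rw [hslope, mul_comm, div_mul_cancel₀ _ hne]
  constructor
  · rw [heq]
    have : 0 ≤ Real.arsinh (ξ * s / t) := Real.arsinh_nonneg_iff.mpr (by positivity)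
    have hba : 0 ≤ b - a := by linarith
    positivity
  · rw [heq]
    have harg : ξ * s / t ≤ b * s / t := by
      gcongr
      exact hξ.2.le
    have : Real.arsinh (ξ * s / t) ≤ Real.arsinh (b * s / t) := Real.arsinh_le_arsinh.mpr harg
    have hba : 0 ≤ b - a := by linarith
    apply mul_le_mul_of_nonneg_left _ hba
    gcongr

lemma zetaKey (s t : ℝ) (hs : 0 < s) (ht : 0 < t) {r r' : ℝ} (hr : 0 ≤ r) (hr' : 0 ≤ r')
    (h : r - s ≤ r') :
    t * Real.exp (-(zeta s r' t)) ≤ (2 * r * s + t) * Real.exp (-(zeta s r t)) := by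
  set r₀ := max (r - s) 0 with hr₀
  have hr₀0 : 0 ≤ r₀ := le_max_right _ _
  have hr₀r : r₀ ≤ r := max_le (by linarith) hr
  have hr₀r' : r₀ ≤ r' := max_le h hr'
  have har : 0 ≤ Real.arsinh (r * s / t) := Real.arsinh_nonneg_iff.mpr (by positivity)
  have h1 : zeta s r₀ t ≤ zeta s r' t := by linarith [(zetaDiff s t hs ht hr₀0 hr₀r').1]
  have h2 : zeta s r t - zeta s r₀ t ≤ Real.arsinh (r * s / t) := by
    have hmvt := (zetaDiff s t hs ht hr₀0 hr₀r).2
    have hba : r - r₀ ≤ s := by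
      have : r - s ≤ r₀ := le_max_left _ _
      linarith
    calc zeta s r t - zeta s r₀ t ≤ (r - r₀) * (Real.arsinh (r * s / t) / s) := hmvt
      _ ≤ s * (Real.arsinh (r * s / t) / s) :=
          mul_le_mul_of_nonneg_right hba (by positivity)
      _ = Real.arsinh (r * s / t) := by field_simp
  have h3 : t * Real.exp (Real.arsinh (r * s / t)) ≤ 2 * r * s + t := by
    rw [Real.exp_arsinh]
    have h4 : Real.sqrt (1 + (r * s / t) ^ 2) ≤ 1 + r * s / t := by
      have h5 : (1:ℝ) + (r * s / t) ^ 2 ≤ (1 + r * s / t) ^ 2 := by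
        nlinarith [div_nonneg (mul_nonneg hr hs.le) ht.le]
      calc Real.sqrt (1 + (r * s / t) ^ 2) ≤ Real.sqrt ((1 + r * s / t) ^ 2) :=
            Real.sqrt_le_sqrt h5
        _ = 1 + r * s / t := Real.sqrt_sq (by positivity)
    have h6 : t * (r * s / t) = r * s := by field_simp
    nlinarith [h4, ht]
  calc t * Real.exp (-(zeta s r' t)) ≤ t * Real.exp (-(zeta s r₀ t)) := by
        have := Real.exp_le_exp.mpr (neg_le_neg h1)
        exact mul_le_mul_of_nonneg_left this ht.le
    _ = (t * Real.exp (zeta s r t - zeta s r₀ t)) * Real.exp (-(zeta s r t)) := by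
        rw [mul_assoc, ← Real.exp_add]; ring_nf
    _ ≤ (t * Real.exp (Real.arsinh (r * s / t))) * Real.exp (-(zeta s r t)) := by
        apply mul_le_mul_of_nonneg_right _ (Real.exp_pos _).le
        exact mul_le_mul_of_nonneg_left (Real.exp_le_exp.mpr h2) ht.le
    _ ≤ (2 * r * s + t) * Real.exp (-(zeta s r t)) :=
        mul_le_mul_of_nonneg_right h3 (Real.exp_pos _).le

lemma zetaUB (s t r R : ℝ) (hs : 0 < s) (ht : 1 ≤ t) (hr : 0 ≤ r) (hrR : r ≤ R) :
    zeta s r t ≤ R / s * Real.arsinh (R * s) := by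
  have ht0 : (0:ℝ) < t := lt_of_lt_of_le one_pos ht
  have h1 : t ≤ Real.sqrt (t ^ 2 + r ^ 2 * s ^ 2) := by
    rw [show t = Real.sqrt (t ^ 2) from (Real.sqrt_sq ht0.le).symm]
    apply Real.sqrt_le_sqrt
    · nlinarith [sq_nonneg (r * s), Real.sq_sqrt (by positivity : (0:ℝ) ≤ t ^ 2)]
  have h2 : r * s * Real.arsinh (r * s / t) ≤ R * s * Real.arsinh (R * s) := by
    have ha1 : Real.arsinh (r * s / t) ≤ Real.arsinh (R * s) := by
      apply Real.arsinh_le_arsinh.mpr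
      calc r * s / t ≤ r * s / 1 := by
            apply div_le_div_of_nonneg_left (by positivity) one_pos ht
        _ = r * s := div_one _
        _ ≤ R * s := by nlinarith
    have ha0 : 0 ≤ Real.arsinh (r * s / t) := Real.arsinh_nonneg_iff.mpr (by positivity)
    apply mul_le_mul (by nlinarith) ha1 ha0 (by nlinarith)
  have key : zeta s r t ≤ (1 / s ^ 2) * (R * s * Real.arsinh (R * s)) := by
    unfold zeta
    have hs2 : (0:ℝ) < 1 / s ^ 2 := by positivity
    apply mul_le_mul_of_nonneg_left _ hs2.le
    linarith
  calc zeta s r t ≤ (1 / s ^ 2) * (R * s * Real.arsinh (R * s)) := key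
    _ = R / s * Real.arsinh (R * s) := by field_simp

lemma heatKernelEqExp {N : ℕ}
    (Δ : Matrix (Fin N) (Fin N) ℝ) (lam : Fin N → ℝ) (φ : Fin N → Fin N → ℝ)
    (heig : ∀ k, Δ.mulVec (φ k) = lam k • φ k)
    (horth : ∀ j k, (∑ y, φ j y * φ k y) = if j = k then (1:ℝ) else 0) :
    ∀ (t : ℝ) (x y : Fin N), heatKernel lam φ t x y = NormedSpace.exp (-(t • Δ)) x y := by
  classical
  set Q : Matrix (Fin N) (Fin N) ℝ := Matrix.of (fun k x => φ k x) with hQdef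
  have hQQ : Q * Qᵀ = 1 := by
    ext j k
    simpa [Matrix.mul_apply, hQdef, Matrix.one_apply] using horth j k
  have hQtQ : Qᵀ * Q = 1 := mul_eq_one_comm.mp hQQ
  have hmv : ∀ (k : Fin N) (x : Fin N), (∑ z, Δ x z * φ k z) = lam k * φ k x := by
    intro k x
    have h := congrFun (heig k) x
    simpa [Matrix.mulVec, dotProduct] using h
  have hΔQ : Δ * Qᵀ = Qᵀ * Matrix.diagonal lam := by
    ext x k
    rw [Matrix.mul_diagonal]
    rw [Matrix.mul_apply]
    simp only [Matrix.transpose_apply, hQdef, Matrix.of_apply]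
    rw [hmv k x]
    ring
  have hΔdec : Δ = Qᵀ * Matrix.diagonal lam * Q := by
    calc Δ = Δ * (Qᵀ * Q) := by rw [hQtQ, Matrix.mul_one]
      _ = (Δ * Qᵀ) * Q := by rw [Matrix.mul_assoc]
      _ = Qᵀ * Matrix.diagonal lam * Q := by rw [hΔQ]
  have hQunit : IsUnit Qᵀ := ⟨⟨Qᵀ, Q, hQtQ, hQQ⟩, rfl⟩
  have hQinv : Qᵀ⁻¹ = Q := Matrix.inv_eq_right_inv hQtQ
  intro t x y
  have hdiag : Matrix.diagonal (fun k => -(t * lam k)) = -(t • Matrix.diagonal lam) := by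
    ext i j
    rcases eq_or_ne i j with rfl | hij
    · simp
    · simp [Matrix.diagonal_apply_ne _ hij]
  have hdec : -(t • Δ) = Qᵀ * Matrix.diagonal (fun k => -(t * lam k)) * Qᵀ⁻¹ := by
    rw [hQinv, hdiag, hΔdec]
    rw [Matrix.mul_neg, Matrix.neg_mul, Matrix.mul_smul, Matrix.smul_mul]
  rw [hdec, Matrix.exp_conj _ _ hQunit, Matrix.exp_diagonal, hQinv]
  have hexpv : (NormedSpace.exp fun k => -(t * lam k)) = fun k => Real.exp (-(t * lam k)) := by
    funext k
    rw [Pi.coe_exp, Real.exp_eq_exp_ℝ]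
  rw [hexpv]
  rw [Matrix.mul_apply]
  unfold heatKernel
  apply Finset.sum_congr rfl
  intro k _
  rw [Matrix.mul_diagonal]
  simp only [Matrix.transpose_apply, hQdef, Matrix.of_apply]
  ring

lemma heatKernelNonneg (N : ℕ)
    (w : Fin N → Fin N → ℝ) (hw_nonneg : ∀ x y, 0 ≤ w x y)
    (Δ : Matrix (Fin N) (Fin N) ℝ)
    (hΔ : ∀ x y, Δ x y = (if x = y then ∑ z, w x z else 0) - w x y)
    (lam : Fin N → ℝ) (φ : Fin N → Fin N → ℝ)
    (heig : ∀ k, Δ.mulVec (φ k) = lam k • φ k)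
    (horth : ∀ j k, (∑ y, φ j y * φ k y) = if j = k then (1:ℝ) else 0) :
    ∀ (t : ℝ), 0 ≤ t → ∀ (z y : Fin N), 0 ≤ heatKernel lam φ t z y := by
  obtain ⟨m, hm⟩ := Finite.exists_le (fun i : Fin N => Δ i i)
  have hoff : ∀ i j, i ≠ j → Δ i j ≤ 0 := by
    intro i j hij
    rw [hΔ, if_neg hij]
    simp [hw_nonneg i j]
  intro t ht z y
  rw [heatKernelEqExp Δ lam φ heig horth]
  exact matExpNegNonneg Δ m hoff hm t ht z y

lemma hermPsiEq (N : ℕ) (hN : 0 < N)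
    (Δ : Matrix (Fin N) (Fin N) ℝ) (lam : Fin N → ℝ) (φ : Fin N → Fin N → ℝ)
    (heig : ∀ k, Δ.mulVec (φ k) = lam k • φ k)
    (hlam0 : lam ⟨0, hN⟩ = 0) :
    ∀ (t : ℝ) (x y : Fin N),
      hermPsi lam φ t x y = t * ∑ z, Δ x z * heatKernel lam φ t z y := by
  classical
  have hmv : ∀ (k : Fin N) (x : Fin N), (∑ z, Δ x z * φ k z) = lam k * φ k x := by
    intro k x
    have h := congrFun (heig k) x
    simpa [Matrix.mulVec, dotProduct] using h
  intro t x y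
  have hfull : hermPsi lam φ t x y
      = ∑ k, t * lam k * Real.exp (-(t * lam k)) * φ k x * φ k y := by
    unfold hermPsi
    apply Finset.sum_subset (Finset.filter_subset _ _)
    intro k _ hk
    have hk0 : (k : ℕ) = 0 := by simpa using hk
    have : k = ⟨0, hN⟩ := Fin.ext hk0
    rw [this, hlam0]
    ring
  rw [hfull]
  unfold heatKernel
  have step1 : (∑ z, Δ x z * ∑ k, Real.exp (-(t * lam k)) * φ k z * φ k y)
      = ∑ k, (Real.exp (-(t * lam k)) * φ k y) * ∑ z, Δ x z * φ k z := by
    simp_rw [Finset.mul_sum]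
    rw [Finset.sum_comm]
    apply Finset.sum_congr rfl
    intro k _
    apply Finset.sum_congr rfl
    intro z _
    ring
  rw [step1, Finset.mul_sum]
  apply Finset.sum_congr rfl
  intro k _
  rw [hmv k x]
  ring

end Aux

set_option maxHeartbeats 1600000 in
theorem hermitian_graph_wavelet_localization
    (N : ℕ) (hN : 1 < N)
    (w : Fin N → Fin N → ℝ)
    (hw_symm : ∀ x y, w x y = w y x)
    (hw_nonneg : ∀ x y, 0 ≤ w x y)
    (hw_diag : ∀ x, w x x = 0)
    (Δ : Matrix (Fin N) (Fin N) ℝ)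
    (hΔ : ∀ x y, Δ x y = (if x = y then ∑ z, w x z else 0) - w x y)
    (lam : Fin N → ℝ) (φ : Fin N → Fin N → ℝ)
    (hmono : Monotone lam)
    (heig : ∀ k, Δ.mulVec (φ k) = lam k • φ k)
    (horth : ∀ j k, (∑ y, φ j y * φ k y) = if j = k then (1:ℝ) else 0)
    (hlam0 : lam ⟨0, by omega⟩ = 0)
    (hconn : 0 < lam ⟨1, hN⟩)
    -- an intrinsic metric ρ on G with jump size s > 0
    (ρ : Fin N → Fin N → ℝ)
    (hρ_nonneg : ∀ x y, 0 ≤ ρ x y)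
    (hρ_triangle : ∀ x y z, ρ x z ≤ ρ x y + ρ y z)
    (hρ_intrinsic : ∀ x, ∑ y, w x y * ρ x y ^ 2 ≤ 1)
    (s : ℝ) (hs : 0 < s)
    (hjump : IsGreatest {r : ℝ | ∃ x y : Fin N, 0 < w x y ∧ ρ x y = r} s)
    -- the heat kernel bound `H_t(x,y) ≤ exp(−ζ_s(t, ρ(x,y)))`
    (hheat : ∀ t : ℝ, 0 < t → ∀ x y : Fin N,
      heatKernel lam φ t x y ≤ Real.exp (-(zeta s (ρ x y) t))) :
    ∃ c : ℝ, 0 < c ∧ ∀ t : ℝ, 0 < t → ∀ x y : Fin N, x ≠ y →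
      |hermPsi lam φ t x y|
        ≤ t * (|deriv (fun u : ℝ => zeta s (ρ x y) u) t| + c / t)
            * Real.exp (-(zeta s (ρ x y) t)) := by
  classical
  have hHpos : ∀ (t : ℝ), 0 ≤ t → ∀ (z y : Fin N), 0 ≤ heatKernel lam φ t z y :=
    heatKernelNonneg N w hw_nonneg Δ hΔ lam φ heig horth
  have hpsiId : ∀ (t : ℝ) (x y : Fin N),
      hermPsi lam φ t x y = t * ∑ z, Δ x z * heatKernel lam φ t z y :=
    hermPsiEq N (by omega) Δ lam φ heig hlam0
  -- ===== constants =====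
  obtain ⟨R0, hR0⟩ := Finite.exists_le (fun p : Fin N × Fin N => ρ p.1 p.2)
  set R := max R0 0 with hRdef
  have hRnn : 0 ≤ R := le_max_right _ _
  have hRbound : ∀ x y : Fin N, ρ x y ≤ R := fun x y => le_trans (hR0 (x, y)) (le_max_left _ _)
  obtain ⟨K0, hK0⟩ := Finite.exists_le (fun x : Fin N => ∑ z, |Δ x z|)
  set K := max K0 0 with hKdef
  have hKnn : 0 ≤ K := le_max_right _ _
  have hKbound : ∀ x : Fin N, (∑ z, |Δ x z|) ≤ K := fun x => le_trans (hK0 x) (le_max_left _ _)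
  set lam1 := lam ⟨1, hN⟩ with hlam1def
  set L := lam ⟨N - 1, by omega⟩ with hLdef
  have hlamnn : ∀ k, 0 ≤ lam k := by
    intro k
    have h0 : (⟨0, by omega⟩ : Fin N) ≤ k := by simp [Fin.le_def]
    have := hmono h0
    rw [hlam0] at this
    exact this
  have hlamL : ∀ k, lam k ≤ L := by
    intro k
    apply hmono
    simp only [Fin.le_def]
    omega
  have hlam1le : ∀ k : Fin N, (k : ℕ) ≠ 0 → lam1 ≤ lam k := by
    intro k hk
    apply hmono
    simp only [Fin.le_def]
    omega
  have hLpos : 0 < L := lt_of_lt_of_le hconn (hlamL _)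
  have hphile : ∀ k x, |φ k x| ≤ 1 := by
    intro k x
    have h1 : φ k x * φ k x ≤ 1 := by
      have horthkk := horth k k
      rw [if_pos rfl] at horthkk
      calc φ k x * φ k x ≤ ∑ y, φ k y * φ k y :=
            Finset.single_le_sum (fun y _ => mul_self_nonneg (φ k y)) (Finset.mem_univ x)
        _ = 1 := horthkk
    exact abs_le_one_iff_mul_self_le_one.mpr h1
  set C1 := R / s * Real.arsinh (R * s) with hC1def
  have hC1nn : 0 ≤ C1 := by
    have := Real.arsinh_nonneg_iff.mpr (mul_nonneg hRnn hs.le)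
    positivity
  set c := N * L / lam1 * Real.exp C1 + K * (2 * R * s + 1) + 1 with hcdef
  have hNL1 : 0 ≤ (N : ℝ) * L / lam1 * Real.exp C1 :=
    mul_nonneg (div_nonneg (mul_nonneg (Nat.cast_nonneg N) hLpos.le) hconn.le)
      (Real.exp_pos _).le
  have hK1 : 0 ≤ K * (2 * R * s + 1) :=
    mul_nonneg hKnn (by nlinarith)
  have hcpos : 0 < c := by
    rw [hcdef]
    linarith
  refine ⟨c, hcpos, ?_⟩
  intro t ht x y hxy
  set r := ρ x y with hrdef
  have hrnn : 0 ≤ r := hρ_nonneg x y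
  set E := Real.exp (-(zeta s r t)) with hEdef
  have hEpos : 0 < E := Real.exp_pos _
  have hcentral : |hermPsi lam φ t x y| ≤ c * E := by
    rcases le_total t 1 with ht1 | ht1
    · -- ===== small time =====
      have hkey : ∀ z : Fin N, Δ x z ≠ 0 →
          t * heatKernel lam φ t z y ≤ (2 * R * s + 1) * E := by
        intro z hz
        rcases eq_or_ne z x with rfl | hzx
        · have hH := hheat t ht z y
          have hHnn := hHpos t ht.le z y
          have h2Rs : (1:ℝ) ≤ 2 * R * s + 1 := by nlinarith
          calc t * heatKernel lam φ t z y ≤ 1 * Real.exp (-(zeta s (ρ z y) t)) :=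
                mul_le_mul ht1 hH hHnn zero_le_one
            _ = E := by rw [one_mul]
            _ ≤ (2 * R * s + 1) * E := le_mul_of_one_le_left hEpos.le h2Rs
        · have hΔxz := hΔ x z
          rw [if_neg (Ne.symm hzx)] at hΔxz
          have hwne : w x z ≠ 0 := by
            intro h0
            apply hz
            rw [hΔxz, h0, sub_zero]
          have hwxz : 0 < w x z := lt_of_le_of_ne (hw_nonneg x z) (Ne.symm hwne)
          have hrs : ρ x z ≤ s := hjump.2 ⟨x, z, hwxz, rfl⟩
          have htri : r ≤ ρ x z + ρ z y := hρ_triangle x z y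
          have hr' : r - s ≤ ρ z y := by linarith
          have hk := zetaKey s t hs ht hrnn (hρ_nonneg z y) hr'
          have hrR : r ≤ R := hRbound x y
          calc t * heatKernel lam φ t z y ≤ t * Real.exp (-(zeta s (ρ z y) t)) :=
                mul_le_mul_of_nonneg_left (hheat t ht z y) ht.le
            _ ≤ (2 * r * s + t) * E := hk
            _ ≤ (2 * R * s + 1) * E := by
                apply mul_le_mul_of_nonneg_right _ hEpos.le
                nlinarith
      rw [hpsiId t x y, abs_mul, abs_of_pos ht]
      have habs : |∑ z, Δ x z * heatKernel lam φ t z y|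
          ≤ ∑ z, |Δ x z| * heatKernel lam φ t z y := by
        calc |∑ z, Δ x z * heatKernel lam φ t z y|
            ≤ ∑ z, |Δ x z * heatKernel lam φ t z y| := Finset.abs_sum_le_sum_abs _ _
          _ = ∑ z, |Δ x z| * heatKernel lam φ t z y := by
              apply Finset.sum_congr rfl
              intro z _
              rw [abs_mul, abs_of_nonneg (hHpos t ht.le z y)]
      calc t * |∑ z, Δ x z * heatKernel lam φ t z y|
          ≤ t * ∑ z, |Δ x z| * heatKernel lam φ t z y :=
            mul_le_mul_of_nonneg_left habs ht.le
        _ = ∑ z, |Δ x z| * (t * heatKernel lam φ t z y) := by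
            rw [Finset.mul_sum]
            apply Finset.sum_congr rfl
            intro z _
            ring
        _ ≤ ∑ z, |Δ x z| * ((2 * R * s + 1) * E) := by
            apply Finset.sum_le_sum
            intro z _
            rcases eq_or_ne (Δ x z) 0 with hz | hz
            · simp [hz]
            · exact mul_le_mul_of_nonneg_left (hkey z hz) (abs_nonneg _)
        _ = (∑ z, |Δ x z|) * ((2 * R * s + 1) * E) := by rw [← Finset.sum_mul]
        _ ≤ K * ((2 * R * s + 1) * E) := by
            apply mul_le_mul_of_nonneg_right (hKbound x) (by positivity)
        _ = (K * (2 * R * s + 1)) * E := by ring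
        _ ≤ c * E := by
            apply mul_le_mul_of_nonneg_right _ hEpos.le
            rw [hcdef]
            linarith
    · -- ===== large time =====
      have hterm : ∀ k ∈ Finset.univ.filter (fun k : Fin N => (k : ℕ) ≠ 0),
          |t * lam k * Real.exp (-(t * lam k)) * φ k x * φ k y|
            ≤ t * L * Real.exp (-(t * lam1)) := by
        intro k hk
        have hk0 : (k : ℕ) ≠ 0 := by simpa using hk
        have h1 : lam1 ≤ lam k := hlam1le k hk0
        have h2 : lam k ≤ L := hlamL k
        have h3 : Real.exp (-(t * lam k)) ≤ Real.exp (-(t * lam1)) := by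
          apply Real.exp_le_exp.mpr
          nlinarith
        rw [abs_mul, abs_mul, abs_mul, abs_mul, abs_of_pos ht,
          abs_of_nonneg (hlamnn k), Real.abs_exp]
        have ha : (0:ℝ) ≤ t * lam k * Real.exp (-(t * lam k)) :=
          mul_nonneg (mul_nonneg ht.le (hlamnn k)) (Real.exp_pos _).le
        calc t * lam k * Real.exp (-(t * lam k)) * |φ k x| * |φ k y|
            ≤ (t * lam k * Real.exp (-(t * lam k)) * 1) * |φ k y| :=
              mul_le_mul_of_nonneg_right
                (mul_le_mul_of_nonneg_left (hphile k x) ha) (abs_nonneg _)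
          _ = t * lam k * Real.exp (-(t * lam k)) * |φ k y| := by ring
          _ ≤ t * lam k * Real.exp (-(t * lam k)) * 1 :=
              mul_le_mul_of_nonneg_left (hphile k y) ha
          _ = t * lam k * Real.exp (-(t * lam k)) := by ring
          _ ≤ t * L * Real.exp (-(t * lam1)) := by
              have h4 : t * lam k ≤ t * L := mul_le_mul_of_nonneg_left h2 ht.le
              have h5 : (0:ℝ) ≤ t * L := mul_nonneg ht.le hLpos.le
              exact mul_le_mul h4 h3 (Real.exp_pos _).le h5
      have hNsum : |hermPsi lam φ t x y| ≤ N * (t * L * Real.exp (-(t * lam1))) := by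
        have hb : (0:ℝ) ≤ t * L * Real.exp (-(t * lam1)) := by positivity
        calc |hermPsi lam φ t x y|
            ≤ ∑ k ∈ Finset.univ.filter (fun k : Fin N => (k : ℕ) ≠ 0),
                |t * lam k * Real.exp (-(t * lam k)) * φ k x * φ k y| :=
              Finset.abs_sum_le_sum_abs _ _
          _ ≤ ∑ _k ∈ Finset.univ.filter (fun k : Fin N => (k : ℕ) ≠ 0),
                t * L * Real.exp (-(t * lam1)) := Finset.sum_le_sum hterm
          _ = ((Finset.univ.filter (fun k : Fin N => (k : ℕ) ≠ 0)).card : ℝ)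
                * (t * L * Real.exp (-(t * lam1))) := by
              rw [Finset.sum_const, nsmul_eq_mul]
          _ ≤ N * (t * L * Real.exp (-(t * lam1))) := by
              apply mul_le_mul_of_nonneg_right _ hb
              have hcard : (Finset.univ.filter (fun k : Fin N => (k : ℕ) ≠ 0)).card ≤ N := by
                calc (Finset.univ.filter (fun k : Fin N => (k : ℕ) ≠ 0)).card
                    ≤ (Finset.univ : Finset (Fin N)).card := Finset.card_filter_le _ _
                  _ = N := Finset.card_fin N
              exact_mod_cast hcard
      have hte : t * Real.exp (-(t * lam1)) ≤ 1 / lam1 := by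
        have h1 : t * lam1 ≤ Real.exp (t * lam1) := by
          linarith [Real.add_one_le_exp (t * lam1)]
        have h2 : (0:ℝ) < Real.exp (t * lam1) := Real.exp_pos _
        rw [Real.exp_neg, inv_eq_one_div, mul_one_div, div_le_div_iff₀ h2 hconn]
        nlinarith
      have hzub : zeta s r t ≤ C1 := zetaUB s t r R hs ht1 hrnn (hRbound x y)
      have hE1 : Real.exp (-C1) ≤ E := Real.exp_le_exp.mpr (neg_le_neg hzub)
      calc |hermPsi lam φ t x y| ≤ N * (t * L * Real.exp (-(t * lam1))) := hNsum
        _ = N * L * (t * Real.exp (-(t * lam1))) := by ring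
        _ ≤ N * L * (1 / lam1) := by
            apply mul_le_mul_of_nonneg_left hte
              (mul_nonneg (Nat.cast_nonneg N) hLpos.le)
        _ = N * L / lam1 * (Real.exp C1 * Real.exp (-C1)) := by
            rw [← Real.exp_add, add_neg_cancel, Real.exp_zero, mul_one]
            ring
        _ ≤ N * L / lam1 * (Real.exp C1 * E) := by
            apply mul_le_mul_of_nonneg_left _
              (div_nonneg (mul_nonneg (Nat.cast_nonneg N) hLpos.le) hconn.le)
            exact mul_le_mul_of_nonneg_left hE1 (Real.exp_pos _).le
        _ = (N * L / lam1 * Real.exp C1) * E := by ring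
        _ ≤ c * E := by
            apply mul_le_mul_of_nonneg_right _ hEpos.le
            rw [hcdef]
            linarith
  -- ===== conclusion =====
  have hsplit : t * (|deriv (fun u : ℝ => zeta s r u) t| + c / t)
      = t * |deriv (fun u : ℝ => zeta s r u) t| + c := by
    field_simp
  have hdnn : 0 ≤ t * |deriv (fun u : ℝ => zeta s r u) t| :=
    mul_nonneg ht.le (abs_nonneg _)
  calc |hermPsi lam φ t x y| ≤ c * E := hcentral
    _ ≤ (t * |deriv (fun u : ℝ => zeta s r u) t| + c) * E := by nlinarith
    _ = t * (|deriv (fun u : ℝ => zeta s r u) t| + c / t) * E := by rw [hsplit]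
end

section
/- Fix b > 0 and s > 0, and define for nonzero complex z with Re z ≥ 0 the function ζ_s(1/z, b) = (1/s²)( (b s) · log( b s z + (1 + (b s z)²)^{1/2} ) − (1/z² + (b s)²)^{1/2} + 1/z ), using the principal branches of the complex logarithm and square root (so that the first term is b s · arcsinh(b s z)). Then there exist constants C > 0 and c > 0 such that for all nonzero z with Re z ≥ 0, |exp( ζ_s(1/z, b) )| ≤ C e^{c |z|}. -/
/-- The analytic continuation `ζ_s(1/z, b)` of the heat-kernel decay exponent to complex
time arguments `1/z`, using the principal branches of `log` and the complex square root
(`w ^ (1/2 : ℂ)` via `Complex.cpow`), so that the first term is `b s · arcsinh(b s z)`. -/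
noncomputable def zetaInv (b s : ℝ) (z : ℂ) : ℂ :=
  (1 / (s : ℂ) ^ 2) *
    ((b : ℂ) * s * Complex.log ((b : ℂ) * s * z + (1 + ((b : ℂ) * s * z) ^ 2) ^ (1/2 : ℂ))
      - (1 / z ^ 2 + ((b : ℂ) * s) ^ 2) ^ (1/2 : ℂ) + 1 / z)

/-- Real part of the principal square root in terms of modulus and real part. -/
lemma re_cpow_half (w : ℂ) (hw : w ≠ 0) :
    (w ^ (1/2 : ℂ)).re = Real.sqrt ((‖w‖ + w.re) / 2) := by
  rw [Complex.cpow_def_of_ne_zero hw]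
  have h1 : ((Complex.log w) * (1/2 : ℂ)).re = Real.log (‖w‖) / 2 := by
    simp [Complex.mul_re, Complex.log_re]
    ring
  have h2 : ((Complex.log w) * (1/2 : ℂ)).im = Complex.arg w / 2 := by
    simp [Complex.mul_im, Complex.log_im]; ring
  rw [Complex.exp_re, h1, h2]
  rw [Real.cos_half (Complex.neg_pi_lt_arg w).le (Complex.arg_le_pi w),
    Complex.cos_arg hw]
  have habs : 0 < ‖w‖ := norm_pos_iff.mpr hw
  have : Real.exp (Real.log (‖w‖) / 2) = Real.sqrt (‖w‖) := by
    rw [Real.sqrt_eq_rpow, Real.rpow_def_of_pos habs]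
    ring_nf
  rw [this, ← Real.sqrt_mul habs.le]
  congr 1
  field_simp

/-- Key inequality: `Re u ≤ Re √(u² + a²)` when `Re u ≥ 0` and `a > 0`. -/
lemma re_le_re_cpow_half (a : ℝ) (ha : 0 < a) (u : ℂ) (hp : 0 ≤ u.re) :
    u.re ≤ ((u ^ 2 + ((a : ℝ) : ℂ) ^ 2) ^ (1/2 : ℂ)).re := by
  set w : ℂ := u ^ 2 + ((a : ℝ) : ℂ) ^ 2 with hw
  have hwre : w.re = u.re ^ 2 - u.im ^ 2 + a ^ 2 := by
    simp [hw, pow_two, Complex.add_re, Complex.mul_re]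
    try ring
  have hwim : w.im = 2 * u.re * u.im := by
    simp [hw, pow_two, Complex.add_im, Complex.mul_im]
    try ring
  by_cases h0 : w = 0
  · have h1 : u.re ^ 2 - u.im ^ 2 + a ^ 2 = 0 := by rw [← hwre, h0]; simp
    have h2 : 2 * u.re * u.im = 0 := by rw [← hwim, h0]; simp
    have h3 : u.re * (u.re ^ 2 + a ^ 2) = 0 := by
      linear_combination u.re * h1 + u.im / 2 * h2
    have : u.re = 0 := by
      rcases mul_eq_zero.mp h3 with h | h
      · exact h
      · exact absurd h (by positivity)
    rw [h0, this]
    simp [Complex.zero_cpow (by norm_num : (1/2 : ℂ) ≠ 0)]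
  · rw [re_cpow_half w h0]
    have habs : 0 ≤ ‖w‖ := norm_nonneg w
    have hsq : (‖w‖) ^ 2 = w.re ^ 2 + w.im ^ 2 := by
      rw [Complex.sq_norm, Complex.normSq_apply]; ring
    have key : (‖w‖) ^ 2 = (2 * u.re ^ 2 - w.re) ^ 2 + 4 * u.re ^ 2 * a ^ 2 := by
      rw [hsq, hwre, hwim]; ring
    have hnn : 0 ≤ (‖w‖ + w.re) / 2 := by
      have h4 := Complex.abs_re_le_norm w
      have h5 := neg_abs_le w.re
      linarith
    rw [Real.le_sqrt hp]
    · nlinarith [key, habs, sq_nonneg (u.re * a)]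
    · exact hnn

/-- Modulus of the principal square root. -/
lemma abs_cpow_half (w : ℂ) :
    ‖w ^ (1/2 : ℂ)‖ = Real.sqrt (‖w‖) := by
  have : (1/2 : ℂ) = ((1/2 : ℝ) : ℂ) := by norm_num
  rw [this, Complex.norm_cpow_real, Real.sqrt_eq_rpow]

theorem exp_zetaInv_exponential_growth_bound (b s : ℝ) (hb : 0 < b) (hs : 0 < s) :
    ∃ C : ℝ, 0 < C ∧ ∃ c : ℝ, 0 < c ∧ ∀ z : ℂ, z ≠ 0 → 0 ≤ z.re →
      ‖Complex.exp (zetaInv b s z)‖ ≤ C * Real.exp (c * ‖z‖) := by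
  refine ⟨1, one_pos, 2 * b ^ 2 + 1, by positivity, ?_⟩
  intro z hz hzre
  set a : ℝ := b * s with ha'
  have ha : 0 < a := mul_pos hb hs
  have hzabs : 0 < ‖z‖ := norm_pos_iff.mpr hz
  rw [Complex.norm_exp, one_mul, Real.exp_le_exp]
  -- rewrite `zetaInv` with the real constant `a = b*s`
  have hcast : (b : ℂ) * (s : ℂ) = ((a : ℝ) : ℂ) := by push_cast [ha']; ring
  have hcast2 : (1 / (s : ℂ) ^ 2) = (((1 / s ^ 2 : ℝ)) : ℂ) := by push_cast; ring
  set W : ℂ := ((a : ℝ) : ℂ) * z + (1 + (((a : ℝ) : ℂ) * z) ^ 2) ^ (1/2 : ℂ) with hW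
  set B : ℂ := (1 / z ^ 2 + ((a : ℝ) : ℂ) ^ 2) ^ (1/2 : ℂ) with hB
  have hzeta : zetaInv b s z
      = (((1 / s ^ 2 : ℝ)) : ℂ) * (((a : ℝ) : ℂ) * Complex.log W - B + 1 / z) := by
    rw [zetaInv, hcast, hcast2, hW, hB]
  have hre : (zetaInv b s z).re
      = (1 / s ^ 2) * (a * Real.log (‖W‖) - B.re + (1 / z).re) := by
    rw [hzeta]
    simp [Complex.mul_re, Complex.mul_im, Complex.sub_re, Complex.add_re, Complex.log_re,
      pow_two]
    try ring
  -- the cancellation: Re(1/z) ≤ Re B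
  have hure : 0 ≤ (1 / z).re := by
    rw [one_div, Complex.inv_re]
    exact div_nonneg hzre (Complex.normSq_nonneg z)
  have hcancel : (1 / z).re ≤ B.re := by
    have h := re_le_re_cpow_half a ha (1 / z) hure
    have : (1 / z) ^ 2 = 1 / z ^ 2 := by rw [div_pow]; norm_num
    rwa [this] at h
  -- bound on log |W|
  have habsW : ‖W‖ ≤ 1 + 2 * a * ‖z‖ := by
    have h1 : ‖(1 + (((a : ℝ) : ℂ) * z) ^ 2) ^ (1/2 : ℂ)‖
        ≤ 1 + a * ‖z‖ := by
      rw [abs_cpow_half]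
      have h2 : ‖1 + (((a : ℝ) : ℂ) * z) ^ 2‖ ≤ (1 + a * ‖z‖) ^ 2 := by
        calc ‖1 + (((a : ℝ) : ℂ) * z) ^ 2‖
            ≤ ‖(1:ℂ)‖ + ‖(((a : ℝ) : ℂ) * z) ^ 2‖ := norm_add_le _ _
          _ = 1 + (a * ‖z‖) ^ 2 := by
              simp [map_pow, Complex.norm_real, abs_of_pos ha]
          _ ≤ (1 + a * ‖z‖) ^ 2 := by nlinarith [mul_pos ha hzabs]
      calc Real.sqrt (‖1 + (((a : ℝ) : ℂ) * z) ^ 2‖)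
          ≤ Real.sqrt ((1 + a * ‖z‖) ^ 2) := Real.sqrt_le_sqrt h2
        _ = 1 + a * ‖z‖ := by
            rw [Real.sqrt_sq (by positivity)]
    calc ‖W‖ ≤ ‖((a : ℝ) : ℂ) * z‖
          + ‖(1 + (((a : ℝ) : ℂ) * z) ^ 2) ^ (1/2 : ℂ)‖ := norm_add_le _ _
      _ ≤ a * ‖z‖ + (1 + a * ‖z‖) := by
          have : ‖((a : ℝ) : ℂ) * z‖ = a * ‖z‖ := by
            simp [Complex.norm_real, abs_of_pos ha]
          rw [this]; linarith [h1]
      _ = 1 + 2 * a * ‖z‖ := by ring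
  have hlog : Real.log (‖W‖) ≤ 2 * a * ‖z‖ := by
    rcases eq_or_lt_of_le (norm_nonneg W) with h | h
    · rw [← h, Real.log_zero]
      positivity
    · calc Real.log (‖W‖) ≤ ‖W‖ - 1 := Real.log_le_sub_one_of_pos h
        _ ≤ 2 * a * ‖z‖ := by linarith [habsW]
  -- put it together
  have hmain : (zetaInv b s z).re ≤ 2 * b ^ 2 * ‖z‖ := by
    rw [hre]
    have h1 : a * Real.log (‖W‖) - B.re + (1 / z).re
        ≤ a * (2 * a * ‖z‖) := by
      have := mul_le_mul_of_nonneg_left hlog ha.le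
      linarith [hcancel]
    have h2 : (1 / s ^ 2 : ℝ) * (a * (2 * a * ‖z‖)) = 2 * b ^ 2 * ‖z‖ := by
      field_simp [ha']
      ring
    calc (1 / s ^ 2 : ℝ) * (a * Real.log (‖W‖) - B.re + (1 / z).re)
        ≤ (1 / s ^ 2 : ℝ) * (a * (2 * a * ‖z‖)) := by
          apply mul_le_mul_of_nonneg_left h1 (by positivity)
      _ = 2 * b ^ 2 * ‖z‖ := h2
  calc (zetaInv b s z).re ≤ 2 * b ^ 2 * ‖z‖ := hmain
    _ ≤ (2 * b ^ 2 + 1) * ‖z‖ := by nlinarith [hzabs]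
end
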